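/- Let T > 0 and let γ satisfy property (⋆) with exponent δ ∈ [0,2). Then there exists a constant C > 0 such that for every integer k ≥ 1, the Fourier coefficient c_k(γ) = (2/T)·∫₀^T γ(t)·cos(kπt/T) dt satisfies |c_k(γ)| ≤ C·k^(δ−2). -/

import Mathlib

open MeasureTheory Real Filter Set intervalIntegral

open Topology

set_option maxHeartbeats 3200000

/-- Alternating sum of a nonneg antitone sequence is between 0 and the first term. -/
lemma altSum_bound' (n : ℕ) (a : ℕ → ℝ) (h0 : ∀ i, 0 ≤ a i)
    (hmono : ∀ i j, i ≤ j → a j ≤ a i) :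
    0 ≤ ∑ j ∈ Finset.range n, (-1 : ℝ) ^ j * a j ∧
      ∑ j ∈ Finset.range n, (-1 : ℝ) ^ j * a j ≤ a 0 := by
  induction n generalizing a with
  | zero => simpa using h0 0
  | succ n ih =>
    have key : ∑ j ∈ Finset.range (n + 1), (-1 : ℝ) ^ j * a j
        = a 0 - ∑ j ∈ Finset.range n, (-1 : ℝ) ^ j * a (j + 1) := by
      rw [Finset.sum_range_succ']
      have : ∀ j, (-1 : ℝ) ^ (j + 1) * a (j + 1) = -((-1 : ℝ) ^ j * a (j + 1)) := by
        intro j; rw [pow_succ]; ring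
      simp only [this, Finset.sum_neg_distrib, pow_zero, one_mul]
      ring
    obtain ⟨h1, h2⟩ := ih (fun j => a (j + 1)) (fun i => h0 (i + 1))
      (fun i j hij => hmono (i + 1) (j + 1) (by omega))
    constructor
    · rw [key]
      have : a 1 ≤ a 0 := hmono 0 1 (by omega)
      linarith
    · rw [key]; linarith

lemma int_bound_eval' (c1 c2 p : ℝ) (hp : -1 < p) (a : ℝ) :
    ∫ t in (0:ℝ)..a, (c1 + c2 * t ^ p) = c1 * a + c2 / (p + 1) * a ^ (p + 1) := by
  have hpne : p + 1 ≠ 0 := by linarith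
  rw [intervalIntegral.integral_add intervalIntegrable_const
      ((intervalIntegral.intervalIntegrable_rpow' hp).const_mul c2),
    intervalIntegral.integral_const, intervalIntegral.integral_const_mul,
    integral_rpow (Or.inl hp), Real.zero_rpow hpne]
  simp
  ring

lemma tendsto_lin_rpow' (c1 c2 q : ℝ) (hq : 0 < q) :
    Tendsto (fun a : ℝ => c1 * a + c2 * a ^ q) (𝓝[>] (0:ℝ)) (𝓝 0) := by
  have h1 : Tendsto (fun a : ℝ => c1 * a + c2 * a ^ q) (𝓝 (0:ℝ))
      (𝓝 (c1 * 0 + c2 * (0:ℝ) ^ q)) := by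
    apply Tendsto.add
    · exact (continuous_const.mul continuous_id).tendsto 0
    · exact (tendsto_const_nhds.mul
        ((Real.continuousAt_rpow_const 0 q (Or.inr hq.le)).tendsto))
  have h0 : c1 * 0 + c2 * (0:ℝ) ^ q = 0 := by
    rw [Real.zero_rpow hq.ne']; ring
  rw [h0] at h1
  exact h1.mono_left nhdsWithin_le_nhds

/-- Property (⋆): `γ` is continuously differentiable (with derivative `γ'`), increasing and
concave on `(0, T]`, and `x ^ δ * γ' x` is nonnegative and bounded near `0⁺`. -/
def PropertyStar (T δ : ℝ) (γ γ' : ℝ → ℝ) : Prop :=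
  (∀ x ∈ Set.Ioc (0 : ℝ) T, HasDerivWithinAt γ (γ' x) (Set.Ioc (0 : ℝ) T) x) ∧
  ContinuousOn γ' (Set.Ioc (0 : ℝ) T) ∧
  MonotoneOn γ (Set.Ioc (0 : ℝ) T) ∧
  ConcaveOn ℝ (Set.Ioc (0 : ℝ) T) γ ∧
  ∃ M > (0 : ℝ), ∃ ε > (0 : ℝ), ∀ x ∈ Set.Ioo (0 : ℝ) ε, 0 ≤ x ^ δ * γ' x ∧ x ^ δ * γ' x ≤ M

/-- under property (⋆) with exponent `δ ∈ [0, 2)`, the Fourier coefficients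
`c_k(γ) = (2/T) ∫₀ᵀ γ(t) cos(kπt/T) dt` satisfy `|c_k(γ)| ≤ C k^(δ - 2)` for all `k ≥ 1`. -/
theorem fourier_coefficients_decay
    (T δ : ℝ) (hT : 0 < T) (hδ : δ ∈ Set.Ico (0 : ℝ) 2)
    (γ γ' : ℝ → ℝ) (hstar : PropertyStar T δ γ γ') :
    ∃ C > (0 : ℝ), ∀ k : ℕ, 1 ≤ k →
      |(2 / T) * ∫ t in (0 : ℝ)..T, γ t * Real.cos (k * π * t / T)| ≤ C * (k : ℝ) ^ (δ - 2) := by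
  obtain ⟨hderiv, hcont', hmono, hconc, M, hM, ε, hε, hbound⟩ := hstar
  obtain ⟨hd0, hd2⟩ := hδ
  have hTne : T ≠ 0 := hT.ne'
  -- continuity of γ on (0,T]
  have hγcont : ContinuousOn γ (Ioc 0 T) := fun x hx =>
    (hderiv x hx).continuousWithinAt
  -- derivative is honest at interior points
  have hderiv' : ∀ x ∈ Ioo (0:ℝ) T, HasDerivAt γ (γ' x) x := by
    intro x hx
    have hmem : Ioc (0:ℝ) T ∈ 𝓝 x :=
      mem_nhds_iff.mpr ⟨Ioo 0 T, Ioo_subset_Ioc_self, isOpen_Ioo, hx⟩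
    exact (hderiv x (Ioo_subset_Ioc_self hx)).hasDerivAt hmem
  -- γ' is antitone
  have hanti : AntitoneOn γ' (Ioc 0 T) := by
    intro x hx y hy hxy
    rcases eq_or_lt_of_le hxy with rfl | hlt
    · exact le_refl _
    · exact (hconc.le_slope_of_hasDerivWithinAt hx hy hlt (hderiv y hy)).trans
        (hconc.slope_le_of_hasDerivWithinAt hx hy hlt (hderiv x hx))
  -- γ' is nonnegative
  have hpos : ∀ x ∈ Ioc (0:ℝ) T, 0 ≤ γ' x := by
    intro x hx
    have hne : (𝓝[Ioo (0:ℝ) x] x).NeBot := by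
      rw [nhdsWithin_Ioo_eq_nhdsLT hx.1]
      infer_instance
    have htend : Tendsto (slope γ x) (𝓝[Ioo (0:ℝ) x] x) (𝓝 (γ' x)) := by
      have h := hasDerivWithinAt_iff_tendsto_slope.mp (hderiv x hx)
      refine h.mono_left (nhdsWithin_mono _ ?_)
      intro y hy
      exact ⟨⟨hy.1, hy.2.le.trans hx.2⟩, by simp [ne_of_lt hy.2]⟩
    refine ge_of_tendsto htend ?_
    filter_upwards [self_mem_nhdsWithin] with y hy
    rw [slope_def_field]
    apply div_nonneg_of_nonpos
    · have : γ y ≤ γ x := hmono ⟨hy.1, hy.2.le.trans hx.2⟩ hx hy.2.le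
      linarith
    · linarith [hy.2]
  -- global bound on γ'
  set e : ℝ := min (ε/2) T with hedef
  have he0 : 0 < e := lt_min (by linarith) hT
  have heT : e ≤ T := min_le_right _ _
  set M₁ : ℝ := max M ((max (γ' e) 0 + 1) * T ^ δ) with hM₁def
  have hM₁ : 0 < M₁ := lt_of_lt_of_le hM (le_max_left _ _)
  have hγ'le : ∀ t ∈ Ioc (0:ℝ) T, γ' t ≤ M₁ * t ^ (-δ) := by
    intro t ht
    have htpos := ht.1
    have htneg : (0:ℝ) < t ^ (-δ) := Real.rpow_pos_of_pos htpos _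
    rcases le_or_gt t e with hte | het
    · have htε : t < ε := lt_of_le_of_lt (hte.trans (min_le_left _ _)) (by linarith)
      have hb2 := (hbound t ⟨htpos, htε⟩).2
      calc γ' t = t ^ (-δ) * (t ^ δ * γ' t) := by
            rw [← mul_assoc, ← Real.rpow_add htpos]; simp
        _ ≤ t ^ (-δ) * M := mul_le_mul_of_nonneg_left hb2 htneg.le
        _ ≤ M₁ * t ^ (-δ) := by
            rw [mul_comm]
            exact mul_le_mul_of_nonneg_right (le_max_left _ _) htneg.le
    · have hγ'te : γ' t ≤ γ' e := hanti ⟨he0, heT⟩ ht het.le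
      have h1 : (1:ℝ) ≤ T ^ δ * t ^ (-δ) := by
        have h2 : T ^ (-δ) ≤ t ^ (-δ) :=
          Real.rpow_le_rpow_of_nonpos htpos ht.2 (by linarith)
        calc (1:ℝ) = T ^ δ * T ^ (-δ) := by rw [← Real.rpow_add hT]; simp
          _ ≤ T ^ δ * t ^ (-δ) :=
            mul_le_mul_of_nonneg_left h2 (Real.rpow_nonneg hT.le _)
      have h3 : γ' t ≤ max (γ' e) 0 + 1 := by
        have := le_max_left (γ' e) 0; linarith
      have h4 : (0:ℝ) < max (γ' e) 0 + 1 := by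
        have := le_max_right (γ' e) 0; linarith
      calc γ' t ≤ (max (γ' e) 0 + 1) * 1 := by linarith [h3]
        _ ≤ (max (γ' e) 0 + 1) * (T ^ δ * t ^ (-δ)) :=
            mul_le_mul_of_nonneg_left h1 h4.le
        _ = ((max (γ' e) 0 + 1) * T ^ δ) * t ^ (-δ) := by ring
        _ ≤ M₁ * t ^ (-δ) :=
            mul_le_mul_of_nonneg_right (le_max_right _ _) htneg.le
  -- FTC for γ' on subintervals [t, T]
  have hFTC : ∀ t ∈ Ioc (0:ℝ) T, ∫ s in t..T, γ' s = γ T - γ t := by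
    intro t ht
    have hsub : Icc t T ⊆ Ioc 0 T := fun s hs => ⟨lt_of_lt_of_le ht.1 hs.1, hs.2⟩
    exact intervalIntegral.integral_eq_sub_of_hasDeriv_right_of_le ht.2
      (hγcont.mono hsub)
      (fun x hx => (hderiv' x ⟨lt_trans ht.1 hx.1, hx.2⟩).hasDerivWithinAt)
      ((hcont'.mono hsub).intervalIntegrable_of_Icc ht.2)
  -- bound on γ
  set K : ℝ := T ^ (1 - δ/2) / (1 - δ/2) with hKdef
  have hK : 0 < K := by
    have : 0 < 1 - δ/2 := by linarith
    positivity
  set Q1 : ℝ := |γ T| with hQ1def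
  set Q2 : ℝ := M₁ * K with hQ2def
  have hQ2 : 0 < Q2 := mul_pos hM₁ hK
  have hγbd : ∀ t ∈ Ioc (0:ℝ) T, |γ t| ≤ Q1 + Q2 * t ^ (-(δ/2)) := by
    intro t ht
    have hsub : Icc t T ⊆ Ioc 0 T := fun s hs => ⟨lt_of_lt_of_le ht.1 hs.1, hs.2⟩
    have hptw : ∀ s ∈ Icc t T, γ' s ≤ (M₁ * t ^ (-(δ/2))) * s ^ (-(δ/2)) := by
      intro s hs
      have hspos : 0 < s := lt_of_lt_of_le ht.1 hs.1
      have h1 : γ' s ≤ M₁ * s ^ (-δ) := hγ'le s (hsub hs)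
      have h2 : s ^ (-δ) = s ^ (-(δ/2)) * s ^ (-(δ/2)) := by
        rw [← Real.rpow_add hspos]; congr 1; ring
      have h3 : s ^ (-(δ/2)) ≤ t ^ (-(δ/2)) :=
        Real.rpow_le_rpow_of_nonpos ht.1 hs.1 (by linarith)
      calc γ' s ≤ M₁ * (s ^ (-(δ/2)) * s ^ (-(δ/2))) := by rw [← h2]; exact h1
        _ ≤ M₁ * (t ^ (-(δ/2)) * s ^ (-(δ/2))) := by
            refine mul_le_mul_of_nonneg_left ?_ hM₁.le
            exact mul_le_mul_of_nonneg_right h3 (Real.rpow_nonneg hspos.le _)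
        _ = (M₁ * t ^ (-(δ/2))) * s ^ (-(δ/2)) := by ring
    have hint1 : IntervalIntegrable γ' volume t T :=
      (hcont'.mono hsub).intervalIntegrable_of_Icc ht.2
    have hint2 : IntervalIntegrable (fun s : ℝ => s ^ (-(δ/2))) volume t T :=
      intervalIntegral.intervalIntegrable_rpow' (by linarith)
    have e1 : ∫ s in t..T, γ' s ≤ ∫ s in t..T, (M₁ * t ^ (-(δ/2))) * s ^ (-(δ/2)) :=
      intervalIntegral.integral_mono_on ht.2 hint1 (hint2.const_mul _) hptw
    have e2 : ∫ s in t..T, (M₁ * t ^ (-(δ/2))) * s ^ (-(δ/2))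
        = (M₁ * t ^ (-(δ/2))) * ((T ^ (1 - δ/2) - t ^ (1 - δ/2)) / (1 - δ/2)) := by
      rw [intervalIntegral.integral_const_mul, integral_rpow (Or.inl (by linarith))]
      simp only [show (-(δ/2) + 1 : ℝ) = 1 - δ/2 from by ring]
    have e3 : (T ^ (1 - δ/2) - t ^ (1 - δ/2)) / (1 - δ/2) ≤ K := by
      rw [hKdef]
      have hd : (0:ℝ) < 1 - δ/2 := by linarith
      have ht' : 0 ≤ t ^ (1 - δ/2) := Real.rpow_nonneg ht.1.le _
      rw [div_le_div_iff₀ hd hd]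
      nlinarith
    have hintle : ∫ s in t..T, γ' s ≤ Q2 * t ^ (-(δ/2)) := by
      have e4 : (M₁ * t ^ (-(δ/2))) * ((T ^ (1 - δ/2) - t ^ (1 - δ/2)) / (1 - δ/2))
          ≤ (M₁ * t ^ (-(δ/2))) * K := by
        exact mul_le_mul_of_nonneg_left e3
          (mul_nonneg hM₁.le (Real.rpow_nonneg ht.1.le _))
      calc ∫ s in t..T, γ' s ≤ _ := e1
        _ = _ := e2
        _ ≤ (M₁ * t ^ (-(δ/2))) * K := e4
        _ = Q2 * t ^ (-(δ/2)) := by rw [hQ2def]; ring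
    have hFt := hFTC t ht
    have hnn : 0 ≤ ∫ s in t..T, γ' s :=
      intervalIntegral.integral_nonneg ht.2 (fun u hu => hpos u (hsub hu))
    have hq2n : 0 ≤ Q2 * t ^ (-(δ/2)) :=
      mul_nonneg hQ2.le (Real.rpow_nonneg ht.1.le _)
    refine abs_le.mpr ⟨?_, ?_⟩
    · have := neg_abs_le (γ T)
      rw [hQ1def]; linarith
    · have := le_abs_self (γ T)
      rw [hQ1def]; linarith
  -- integrability of γ·cos and of γ'·sin for each frequency
  have hbdInt : IntegrableOn (fun t : ℝ => Q1 + Q2 * t ^ (-(δ/2))) (Ioc 0 T) volume := by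
    rw [← intervalIntegrable_iff_integrableOn_Ioc_of_le hT.le]
    exact intervalIntegrable_const.add
      ((intervalIntegral.intervalIntegrable_rpow' (by linarith)).const_mul _)
  have hγcosInt : ∀ ω : ℝ, IntervalIntegrable (fun t => γ t * Real.cos (ω * t)) volume 0 T := by
    intro ω
    rw [intervalIntegrable_iff_integrableOn_Ioc_of_le hT.le]
    have hmeas : AEStronglyMeasurable (fun t => γ t * Real.cos (ω * t))
        (volume.restrict (Ioc 0 T)) :=
      (hγcont.mul (Continuous.continuousOn (Real.continuous_cos.comp (continuous_const.mul continuous_id)))).aestronglyMeasurable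
        measurableSet_Ioc
    refine MeasureTheory.Integrable.mono hbdInt hmeas ?_
    refine (ae_restrict_iff' measurableSet_Ioc).mpr (ae_of_all _ fun t ht => ?_)
    rw [Real.norm_eq_abs, Real.norm_eq_abs, abs_mul]
    calc |γ t| * |Real.cos (ω * t)| ≤ |γ t| * 1 :=
          mul_le_mul_of_nonneg_left (Real.abs_cos_le_one _) (abs_nonneg _)
      _ = |γ t| := mul_one _
      _ ≤ Q1 + Q2 * t ^ (-(δ/2)) := hγbd t ht
      _ ≤ |Q1 + Q2 * t ^ (-(δ/2))| := le_abs_self _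
  have hγ'sinInt : ∀ ω : ℝ, 0 < ω →
      IntervalIntegrable (fun t => γ' t * Real.sin (ω * t)) volume 0 T := by
    intro ω hω
    rw [intervalIntegrable_iff_integrableOn_Ioc_of_le hT.le]
    have hmeas : AEStronglyMeasurable (fun t => γ' t * Real.sin (ω * t))
        (volume.restrict (Ioc 0 T)) :=
      (hcont'.mul (Continuous.continuousOn (Real.continuous_sin.comp (continuous_const.mul continuous_id)))).aestronglyMeasurable
        measurableSet_Ioc
    have hbdInt' : IntegrableOn (fun t : ℝ => 0 + (M₁ * ω) * t ^ (1 - δ)) (Ioc 0 T) volume := by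
      rw [← intervalIntegrable_iff_integrableOn_Ioc_of_le hT.le]
      exact intervalIntegrable_const.add
        ((intervalIntegral.intervalIntegrable_rpow' (by linarith)).const_mul _)
    refine MeasureTheory.Integrable.mono hbdInt' hmeas ?_
    refine (ae_restrict_iff' measurableSet_Ioc).mpr (ae_of_all _ fun t ht => ?_)
    rw [Real.norm_eq_abs, Real.norm_eq_abs, abs_mul]
    have h0 := hpos t ht
    have h1 := hγ'le t ht
    have hsin : |Real.sin (ω * t)| ≤ ω * t := by
      calc |Real.sin (ω * t)| ≤ |ω * t| := Real.abs_sin_le_abs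
        _ = ω * t := abs_of_pos (mul_pos hω ht.1)
    have hh : t ^ (1 - δ) = t ^ (-δ) * t := by
      rw [show (1 - δ : ℝ) = -δ + 1 from by ring, Real.rpow_add ht.1, Real.rpow_one]
    have hbd1 : (0:ℝ) ≤ M₁ * t ^ (-δ) := mul_nonneg hM₁.le (Real.rpow_nonneg ht.1.le _)
    calc |γ' t| * |Real.sin (ω * t)| = γ' t * |Real.sin (ω * t)| := by rw [abs_of_nonneg h0]
      _ ≤ (M₁ * t ^ (-δ)) * (ω * t) := mul_le_mul h1 hsin (abs_nonneg _) hbd1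
      _ = (M₁ * ω) * (t ^ (-δ) * t) := by ring
      _ = 0 + (M₁ * ω) * t ^ (1 - δ) := by rw [hh]; ring
      _ ≤ |0 + (M₁ * ω) * t ^ (1 - δ)| := le_abs_self _
  -- main constant
  have h2δ : 0 < 2 - δ := by linarith
  refine ⟨2 * M₁ * T ^ (2 - δ) / (T * (2 - δ)), by positivity, ?_⟩
  intro k hk
  have hkpos : (0:ℝ) < k := by exact_mod_cast hk
  set ω : ℝ := k * π / T with hωdef
  have hω : 0 < ω := by
    have := Real.pi_pos
    positivity
  have hrw : ∀ t : ℝ, (k : ℝ) * π * t / T = ω * t := fun t => by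
    rw [hωdef]; ring
  have hωT : ω * T = k * π := by rw [hωdef]; field_simp
  set b : ℝ := T / k with hbdef
  have hb : 0 < b := by positivity
  have hωb : ω * b = π := by rw [hωdef, hbdef]; field_simp
  have hkb : (k:ℝ) * b = T := by rw [hbdef]; field_simp
  -- integration by parts identity on [a, T]
  have hIBP : ∀ a ∈ Ioo (0:ℝ) T,
      ∫ t in a..T, γ t * Real.cos (ω * t)
        = -(γ a * Real.sin (ω * a) / ω) - (1/ω) * ∫ t in a..T, γ' t * Real.sin (ω * t) := by
    intro a ha
    have haT : a ≤ T := ha.2.le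
    have hsub : Icc a T ⊆ Ioc 0 T := fun s hs => ⟨lt_of_lt_of_le ha.1 hs.1, hs.2⟩
    have hsincont : Continuous (fun t : ℝ => Real.sin (ω * t)) :=
      Real.continuous_sin.comp (continuous_const.mul continuous_id)
    have hcoscont : Continuous (fun t : ℝ => Real.cos (ω * t)) :=
      Real.continuous_cos.comp (continuous_const.mul continuous_id)
    have hFcont : ContinuousOn (fun t => γ t * Real.sin (ω * t) / ω) (Icc a T) :=
      ((hγcont.mono hsub).mul hsincont.continuousOn).div_const ω
    have hFder : ∀ x ∈ Ioo a T, HasDerivWithinAt (fun t => γ t * Real.sin (ω * t) / ω)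
        (γ' x * Real.sin (ω * x) / ω + γ x * Real.cos (ω * x)) (Ioi x) x := by
      intro x hx
      have hγx : HasDerivAt γ (γ' x) x := hderiv' x ⟨lt_trans ha.1 hx.1, hx.2⟩
      have hsx : HasDerivAt (fun t => Real.sin (ω * t)) (Real.cos (ω * x) * (ω * 1)) x :=
        (Real.hasDerivAt_sin (ω * x)).comp x ((hasDerivAt_id x).const_mul ω)
      have hprod := (hγx.mul hsx).div_const ω
      have heq : (γ' x * Real.sin (ω * x) + γ x * (Real.cos (ω * x) * (ω * 1))) / ω
          = γ' x * Real.sin (ω * x) / ω + γ x * Real.cos (ω * x) := by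
        field_simp
      rw [heq] at hprod
      exact hprod.hasDerivWithinAt
    have hint1 : IntervalIntegrable (fun t => γ' t * Real.sin (ω * t) / ω) volume a T :=
      (((hcont'.mono hsub).mul hsincont.continuousOn).div_const ω).intervalIntegrable_of_Icc haT
    have hint2 : IntervalIntegrable (fun t => γ t * Real.cos (ω * t)) volume a T :=
      ((hγcont.mono hsub).mul hcoscont.continuousOn).intervalIntegrable_of_Icc haT
    have hF'int : IntervalIntegrable
        (fun t => γ' t * Real.sin (ω * t) / ω + γ t * Real.cos (ω * t)) volume a T :=
      hint1.add hint2
    have hFTC2 := intervalIntegral.integral_eq_sub_of_hasDeriv_right_of_le haT hFcont hFder hF'int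
    have hFT : γ T * Real.sin (ω * T) / ω = 0 := by
      rw [hωT, Real.sin_nat_mul_pi]
      ring
    rw [hFT, zero_sub] at hFTC2
    rw [intervalIntegral.integral_add hint1 hint2, intervalIntegral.integral_div] at hFTC2
    have harr : (1/ω) * ∫ t in a..T, γ' t * Real.sin (ω * t)
        = (∫ t in a..T, γ' t * Real.sin (ω * t)) / ω := by ring
    rw [harr]
    linarith [hFTC2]
  -- limit: the identity extends to a = 0
  have hkey : ∫ t in (0:ℝ)..T, γ t * Real.cos (ω * t)
      = -(1/ω) * ∫ t in (0:ℝ)..T, γ' t * Real.sin (ω * t) := by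
    have hl : (𝓝[Ioo (0:ℝ) T] (0:ℝ)).NeBot := by
      rw [nhdsWithin_Ioo_eq_nhdsGT hT]
      infer_instance
    have hup : 𝓝[Ioo (0:ℝ) T] (0:ℝ) ≤ 𝓝[>] (0:ℝ) := nhdsWithin_mono _ Ioo_subset_Ioi_self
    have tail : ∀ (F : ℝ → ℝ) (c1 c2 p : ℝ), -1 < p → IntervalIntegrable F volume 0 T →
        (∀ t ∈ Ioc (0:ℝ) T, ‖F t‖ ≤ c1 + c2 * t ^ p) →
        Tendsto (fun a => ∫ t in a..T, F t) (𝓝[Ioo (0:ℝ) T] (0:ℝ))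
          (𝓝 (∫ t in (0:ℝ)..T, F t)) := by
      intro F c1 c2 p hp hFint hFbd
      have hsmall : Tendsto (fun a => ∫ t in (0:ℝ)..a, F t) (𝓝[Ioo (0:ℝ) T] (0:ℝ)) (𝓝 0) := by
        refine squeeze_zero_norm'
          (a := fun x => |c1 * x + c2/(p+1) * x ^ (p+1)|) ?_ ?_
        · filter_upwards [self_mem_nhdsWithin] with a ha
          have hsub2 : Set.uIoc (0:ℝ) a ⊆ Ioc 0 T := by
            rw [uIoc_of_le ha.1.le]
            exact Ioc_subset_Ioc_right ha.2.le
          have hbint : IntervalIntegrable (fun t : ℝ => c1 + c2 * t ^ p) volume 0 a :=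
            intervalIntegrable_const.add
              ((intervalIntegral.intervalIntegrable_rpow' hp).const_mul _)
          have h := intervalIntegral.norm_integral_le_of_norm_le
            (μ := volume) (f := F) (a := (0:ℝ)) (b := a) (g := fun t => c1 + c2 * t ^ p)
            ha.1.le
              (ae_of_all _ fun t ht => hFbd t (hsub2 (by rw [uIoc_of_le ha.1.le]; exact ht))) hbint
          rw [int_bound_eval' c1 c2 p hp a] at h
          exact h.trans (le_abs_self _)
        · simpa using ((tendsto_lin_rpow' c1 (c2/(p+1)) (p+1) (by linarith)).mono_left hup).abs
      have hsplit2 : ∀ᶠ a in 𝓝[Ioo (0:ℝ) T] (0:ℝ),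
          (∫ t in (0:ℝ)..T, F t) - (∫ t in (0:ℝ)..a, F t) = ∫ t in a..T, F t := by
        filter_upwards [self_mem_nhdsWithin] with a ha
        have h1 : IntervalIntegrable F volume 0 a := hFint.mono_set (by
          rw [uIcc_of_le ha.1.le, uIcc_of_le hT.le]; exact Icc_subset_Icc_right ha.2.le)
        have h2 : IntervalIntegrable F volume a T := hFint.mono_set (by
          rw [uIcc_of_le ha.2.le, uIcc_of_le hT.le]; exact Icc_subset_Icc_left ha.1.le)
        have := intervalIntegral.integral_add_adjacent_intervals h1 h2
        linarith
      have htend : Tendsto (fun a => (∫ t in (0:ℝ)..T, F t) - ∫ t in (0:ℝ)..a, F t)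
          (𝓝[Ioo (0:ℝ) T] (0:ℝ)) (𝓝 ((∫ t in (0:ℝ)..T, F t) - 0)) :=
        tendsto_const_nhds.sub hsmall
      rw [sub_zero] at htend
      exact Tendsto.congr' hsplit2 htend
    have t1 : Tendsto (fun a => ∫ t in a..T, γ t * Real.cos (ω * t)) (𝓝[Ioo (0:ℝ) T] (0:ℝ))
        (𝓝 (∫ t in (0:ℝ)..T, γ t * Real.cos (ω * t))) := by
      refine tail _ Q1 Q2 (-(δ/2)) (by linarith) (hγcosInt ω) (fun t ht => ?_)
      rw [Real.norm_eq_abs, abs_mul]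
      calc |γ t| * |Real.cos (ω * t)| ≤ |γ t| * 1 :=
            mul_le_mul_of_nonneg_left (Real.abs_cos_le_one _) (abs_nonneg _)
        _ = |γ t| := mul_one _
        _ ≤ Q1 + Q2 * t ^ (-(δ/2)) := hγbd t ht
    have t2 : Tendsto (fun a => ∫ t in a..T, γ' t * Real.sin (ω * t)) (𝓝[Ioo (0:ℝ) T] (0:ℝ))
        (𝓝 (∫ t in (0:ℝ)..T, γ' t * Real.sin (ω * t))) := by
      refine tail _ 0 (M₁ * ω) (1 - δ) (by linarith) (hγ'sinInt ω hω) (fun t ht => ?_)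
      rw [Real.norm_eq_abs, abs_mul]
      have h0 := hpos t ht
      have h1 := hγ'le t ht
      have hsin : |Real.sin (ω * t)| ≤ ω * t := by
        calc |Real.sin (ω * t)| ≤ |ω * t| := Real.abs_sin_le_abs
          _ = ω * t := abs_of_pos (mul_pos hω ht.1)
      have hh : t ^ (1 - δ) = t ^ (-δ) * t := by
        rw [show (1 - δ : ℝ) = -δ + 1 from by ring, Real.rpow_add ht.1, Real.rpow_one]
      have hbd1 : (0:ℝ) ≤ M₁ * t ^ (-δ) := mul_nonneg hM₁.le (Real.rpow_nonneg ht.1.le _)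
      calc |γ' t| * |Real.sin (ω * t)| = γ' t * |Real.sin (ω * t)| := by rw [abs_of_nonneg h0]
        _ ≤ (M₁ * t ^ (-δ)) * (ω * t) := mul_le_mul h1 hsin (abs_nonneg _) hbd1
        _ = (M₁ * ω) * (t ^ (-δ) * t) := by ring
        _ = 0 + (M₁ * ω) * t ^ (1 - δ) := by rw [hh]; ring
    have t3' : Tendsto (fun a => γ a * Real.sin (ω * a) / ω) (𝓝[Ioo (0:ℝ) T] (0:ℝ)) (𝓝 0) := by
      refine squeeze_zero_norm'
        (a := fun x => Q1 * x + Q2 * x ^ (1 - δ/2)) ?_ ?_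
      · filter_upwards [self_mem_nhdsWithin] with a ha
        have h1 : |γ a| ≤ Q1 + Q2 * a ^ (-(δ/2)) := hγbd a ⟨ha.1, ha.2.le⟩
        have hQn : 0 ≤ Q1 + Q2 * a ^ (-(δ/2)) := le_trans (abs_nonneg _) h1
        have hsin : |Real.sin (ω * a)| ≤ ω * a := by
          calc |Real.sin (ω * a)| ≤ |ω * a| := Real.abs_sin_le_abs
            _ = ω * a := abs_of_pos (mul_pos hω ha.1)
        have hnum : |γ a| * |Real.sin (ω * a)| ≤ (Q1 + Q2 * a ^ (-(δ/2))) * (ω * a) :=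
          mul_le_mul h1 hsin (abs_nonneg _) hQn
        have hh : a ^ (-(δ/2)) * a = a ^ (1 - δ/2) := by
          rw [show (1 - δ/2 : ℝ) = -(δ/2) + 1 from by ring, Real.rpow_add ha.1, Real.rpow_one]
        rw [Real.norm_eq_abs, abs_div, abs_mul, abs_of_pos hω]
        rw [div_le_iff₀ hω]
        show |γ a| * |Real.sin (ω * a)| ≤ (Q1 * a + Q2 * a ^ (1 - δ/2)) * ω
        calc |γ a| * |Real.sin (ω * a)| ≤ (Q1 + Q2 * a ^ (-(δ/2))) * (ω * a) := hnum
          _ = (Q1 * a + Q2 * (a ^ (-(δ/2)) * a)) * ω := by ring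
          _ = (Q1 * a + Q2 * a ^ (1 - δ/2)) * ω := by rw [hh]
      · simpa using (tendsto_lin_rpow' Q1 Q2 (1 - δ/2) (by linarith)).mono_left hup
    have t3 : Tendsto (fun a => -(γ a * Real.sin (ω * a) / ω)) (𝓝[Ioo (0:ℝ) T] (0:ℝ)) (𝓝 0) := by
      simpa using t3'.neg
    have hRHS : Tendsto (fun a => -(γ a * Real.sin (ω * a) / ω)
        - (1/ω) * ∫ t in a..T, γ' t * Real.sin (ω * t)) (𝓝[Ioo (0:ℝ) T] (0:ℝ))
        (𝓝 (0 - (1/ω) * ∫ t in (0:ℝ)..T, γ' t * Real.sin (ω * t))) :=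
      t3.sub (t2.const_mul (1/ω))
    have heq2 : (fun a => ∫ t in a..T, γ t * Real.cos (ω * t)) =ᶠ[𝓝[Ioo (0:ℝ) T] (0:ℝ)]
        (fun a => -(γ a * Real.sin (ω * a) / ω)
          - (1/ω) * ∫ t in a..T, γ' t * Real.sin (ω * t)) := by
      filter_upwards [self_mem_nhdsWithin] with a ha
      exact hIBP a ha
    have := tendsto_nhds_unique (Tendsto.congr' heq2 t1) hRHS
    rw [this]
    ring
  -- decomposition of the sine integral into arches
  set A : ℕ → ℝ := fun j => ∫ s in (0:ℝ)..b, γ' (s + j * b) * Real.sin (ω * s) with hAdef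
  have hbT : b ≤ T := by
    rw [hbdef]
    apply div_le_self hT.le
    exact_mod_cast hk
  have hsinshift : ∀ (j : ℕ) (s : ℝ), Real.sin (ω * (s + j * b)) = (-1:ℝ)^j * Real.sin (ω * s) := by
    intro j s
    have h1 : ω * (s + j * b) = ω * s + (j:ℝ) * (ω * b) := by ring
    rw [h1, hωb, Real.sin_add_nat_mul_pi]
  have hintj : ∀ j, j < k → IntervalIntegrable (fun t => γ' t * Real.sin (ω * t)) volume
      ((j:ℝ) * b) (((j:ℝ) + 1) * b) := by
    intro j hj
    apply (hγ'sinInt ω hω).mono_set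
    have hj1 : ((j:ℝ) + 1) ≤ (k:ℝ) := by exact_mod_cast hj
    have hjb : (0:ℝ) ≤ (j:ℝ) * b := by positivity
    have hle : ((j:ℝ) + 1) * b ≤ T := by
      calc ((j:ℝ) + 1) * b ≤ (k:ℝ) * b := mul_le_mul_of_nonneg_right hj1 hb.le
        _ = T := hkb
    have hjj : (j:ℝ) * b ≤ ((j:ℝ) + 1) * b := by nlinarith
    rw [uIcc_of_le hjj, uIcc_of_le hT.le]
    exact Icc_subset_Icc hjb hle
  have hAint : ∀ j, j < k → IntervalIntegrable
      (fun s => γ' (s + j * b) * Real.sin (ω * s)) volume 0 b := by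
    intro j hj
    have hsq : ((-1:ℝ)^j) * ((-1:ℝ)^j) = 1 := by
      rw [← mul_pow]; norm_num
    have hfe2 : (fun s => γ' (s + j * b) * Real.sin (ω * s))
        = fun s => (-1:ℝ)^j * (γ' (s + j * b) * Real.sin (ω * (s + j * b))) := by
      funext s
      calc γ' (s + j * b) * Real.sin (ω * s)
          = (((-1:ℝ)^j) * ((-1:ℝ)^j)) * (γ' (s + j * b) * Real.sin (ω * s)) := by
            rw [hsq]; ring
        _ = (-1:ℝ)^j * (γ' (s + j * b) * ((-1:ℝ)^j * Real.sin (ω * s))) := by ring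
        _ = (-1:ℝ)^j * (γ' (s + j * b) * Real.sin (ω * (s + j * b))) := by
            rw [hsinshift j s]
    rw [hfe2]
    have h2 := ((hintj j hj).comp_add_right ((j:ℝ) * b)).const_mul ((-1:ℝ)^j)
    have hb1 : (j:ℝ) * b - (j:ℝ) * b = 0 := by ring
    have hb2 : ((j:ℝ) + 1) * b - (j:ℝ) * b = b := by ring
    rw [hb1, hb2] at h2
    exact h2
  have hIj : ∀ j, j < k → ((-1:ℝ))^j * A j
      = ∫ t in ((j:ℝ) * b)..(((j:ℝ) + 1) * b), γ' t * Real.sin (ω * t) := by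
    intro j hj
    rw [hAdef]
    simp only
    rw [← intervalIntegral.integral_const_mul]
    have hfe : ∀ s : ℝ, (-1:ℝ)^j * (γ' (s + j * b) * Real.sin (ω * s))
        = γ' (s + (j:ℝ) * b) * Real.sin (ω * (s + (j:ℝ) * b)) := by
      intro s
      rw [hsinshift j s]
      ring
    simp only [hfe]
    rw [intervalIntegral.integral_comp_add_right (fun t => γ' t * Real.sin (ω * t)) ((j:ℝ) * b)]
    rw [show (0:ℝ) + (j:ℝ) * b = (j:ℝ) * b from by ring,
      show b + (j:ℝ) * b = ((j:ℝ) + 1) * b from by ring]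
  have hsum : ∫ t in (0:ℝ)..T, γ' t * Real.sin (ω * t)
      = ∑ j ∈ Finset.range k, (-1:ℝ) ^ j * A j := by
    have hcast : ∀ i : ℕ, ((i + 1 : ℕ) : ℝ) = (i:ℝ) + 1 := by intro i; push_cast; ring
    have hint' : ∀ i < k, IntervalIntegrable (fun t => γ' t * Real.sin (ω * t)) volume
        (((i:ℕ):ℝ) * b) (((i + 1 : ℕ):ℝ) * b) := by
      intro i hi
      rw [hcast i]
      exact hintj i hi
    have hadj := intervalIntegral.sum_integral_adjacent_intervals
      (a := fun j : ℕ => (j:ℝ) * b) (μ := volume)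
      (f := fun t => γ' t * Real.sin (ω * t)) hint'
    simp only [Nat.cast_zero, zero_mul] at hadj
    rw [hkb] at hadj
    rw [← hadj]
    apply Finset.sum_congr rfl
    intro j hj
    rw [hIj j (Finset.mem_range.mp hj), hcast j]
  have hmem' : ∀ (j : ℕ) (u : ℝ), j < k → 0 < u → u ≤ b → u + j * b ∈ Ioc (0:ℝ) T := by
    intro j u hj hu hub
    constructor
    · positivity
    · have hj' : (j:ℝ) ≤ (k:ℝ) - 1 := by
        have : (j:ℝ) + 1 ≤ (k:ℝ) := by exact_mod_cast hj
        linarith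
      have h1 : (j:ℝ) * b ≤ ((k:ℝ) - 1) * b := mul_le_mul_of_nonneg_right hj' hb.le
      have : u + (j:ℝ) * b ≤ b + ((k:ℝ) - 1) * b := by linarith
      calc u + (j:ℝ) * b ≤ b + ((k:ℝ) - 1) * b := this
        _ = (k:ℝ) * b := by ring
        _ = T := hkb
  have hsinb : ∀ u : ℝ, 0 ≤ u → u ≤ b → 0 ≤ Real.sin (ω * u) := by
    intro u hu hub
    apply Real.sin_nonneg_of_nonneg_of_le_pi
    · positivity
    · calc ω * u ≤ ω * b := mul_le_mul_of_nonneg_left hub hω.le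
        _ = π := hωb
  have hA0 : ∀ j, j < k → 0 ≤ A j := by
    intro j hj
    apply intervalIntegral.integral_nonneg hb.le
    intro u hu
    rcases eq_or_lt_of_le hu.1 with h0 | h0
    · rw [← h0]
      simp
    · exact mul_nonneg (hpos _ (hmem' j u hj h0 hu.2)) (hsinb u hu.1 hu.2)
  have hAanti : ∀ i j, i ≤ j → j < k → A j ≤ A i := by
    intro i j hij hjk
    apply intervalIntegral.integral_mono_on hb.le (hAint j hjk)
      (hAint i (lt_of_le_of_lt hij hjk))
    intro u hu
    rcases eq_or_lt_of_le hu.1 with h0 | h0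
    · rw [← h0]
      simp
    · have hmi := hmem' i u (lt_of_le_of_lt hij hjk) h0 hu.2
      have hmj := hmem' j u hjk h0 hu.2
      have hle : u + (i:ℝ) * b ≤ u + (j:ℝ) * b := by
        have hij' : (i:ℝ) ≤ (j:ℝ) := by exact_mod_cast hij
        have := mul_le_mul_of_nonneg_right hij' hb.le
        linarith
      exact mul_le_mul_of_nonneg_right (hanti hmi hmj hle) (hsinb u hu.1 hu.2)
  -- alternating bound
  have hJ : |∫ t in (0:ℝ)..T, γ' t * Real.sin (ω * t)| ≤ A 0 := by
    have hk1 : k - 1 < k := Nat.sub_lt (by omega) one_pos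
    have hminlt : ∀ i : ℕ, min i (k-1) < k := fun i => lt_of_le_of_lt (min_le_right _ _) hk1
    obtain ⟨hge, hle⟩ := altSum_bound' k (fun j => A (min j (k-1)))
      (fun i => hA0 _ (hminlt i))
      (fun i j hij => hAanti _ _ (min_le_min hij le_rfl) (hminlt j))
    have hsum2 : ∑ j ∈ Finset.range k, (-1:ℝ)^j * A (min j (k-1))
        = ∑ j ∈ Finset.range k, (-1:ℝ)^j * A j := by
      apply Finset.sum_congr rfl
      intro j hj
      rw [min_eq_left (Nat.le_sub_one_of_lt (Finset.mem_range.mp hj))]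
    rw [hsum2] at hge hle
    rw [hsum, abs_of_nonneg hge]
    simpa [min_eq_left (Nat.zero_le (k-1))] using hle
  -- bound on the first arch
  have hA0bd : A 0 ≤ M₁ * ω * (b ^ (2 - δ) / (2 - δ)) := by
    have hA0eq : A 0 = ∫ s in (0:ℝ)..b, γ' s * Real.sin (ω * s) := by
      rw [hAdef]
      norm_num
    have hrint : IntervalIntegrable (fun s : ℝ => (M₁ * ω) * s ^ (1 - δ)) volume 0 b :=
      (intervalIntegral.intervalIntegrable_rpow' (by linarith)).const_mul _
    have hlint : IntervalIntegrable (fun s => γ' s * Real.sin (ω * s)) volume 0 b :=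
      (hγ'sinInt ω hω).mono_set (by
        rw [uIcc_of_le hb.le, uIcc_of_le hT.le]
        exact Icc_subset_Icc_right hbT)
    have e1 : ∫ s in (0:ℝ)..b, γ' s * Real.sin (ω * s)
        ≤ ∫ s in (0:ℝ)..b, (M₁ * ω) * s ^ (1 - δ) := by
      apply intervalIntegral.integral_mono_on hb.le hlint hrint
      intro u hu
      rcases eq_or_lt_of_le hu.1 with h0 | h0
      · rw [← h0]
        simp
        positivity
      · have hmem : u ∈ Ioc (0:ℝ) T := ⟨h0, hu.2.trans hbT⟩
        have h1 := hγ'le u hmem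
        have hsin2 : Real.sin (ω * u) ≤ ω * u := Real.sin_le (by positivity)
        have hbb : (0:ℝ) ≤ M₁ * u ^ (-δ) := mul_nonneg hM₁.le (Real.rpow_nonneg h0.le _)
        have hh : u ^ (1 - δ) = u ^ (-δ) * u := by
          rw [show (1 - δ : ℝ) = -δ + 1 from by ring, Real.rpow_add h0, Real.rpow_one]
        calc γ' u * Real.sin (ω * u) ≤ (M₁ * u ^ (-δ)) * (ω * u) :=
              mul_le_mul h1 hsin2 (hsinb u hu.1 hu.2) hbb
          _ = (M₁ * ω) * (u ^ (-δ) * u) := by ring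
          _ = (M₁ * ω) * u ^ (1 - δ) := by rw [hh]
    have e2 : ∫ s in (0:ℝ)..b, (M₁ * ω) * s ^ (1 - δ) = M₁ * ω * (b ^ (2 - δ) / (2 - δ)) := by
      rw [intervalIntegral.integral_const_mul, integral_rpow (Or.inl (by linarith))]
      simp only [show (1 - δ + 1 : ℝ) = 2 - δ from by ring]
      rw [Real.zero_rpow h2δ.ne']
      ring
    rw [hA0eq]
    calc ∫ s in (0:ℝ)..b, γ' s * Real.sin (ω * s) ≤ _ := e1
      _ = _ := e2
  -- put everything together
  have hkpow : (0:ℝ) < (k:ℝ) ^ (2 - δ) := Real.rpow_pos_of_pos hkpos _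
  simp only [hrw]
  rw [hkey]
  have habs : |(2 / T) * (-(1/ω) * ∫ t in (0:ℝ)..T, γ' t * Real.sin (ω * t))|
      = (2 / T) * ((1/ω) * |∫ t in (0:ℝ)..T, γ' t * Real.sin (ω * t)|) := by
    rw [abs_mul, abs_mul, abs_neg, abs_of_pos (by positivity : (0:ℝ) < 2 / T),
      abs_of_pos (by positivity : (0:ℝ) < 1/ω)]
  rw [habs]
  calc (2 / T) * ((1/ω) * |∫ t in (0:ℝ)..T, γ' t * Real.sin (ω * t)|)
      ≤ (2 / T) * ((1/ω) * (M₁ * ω * (b ^ (2 - δ) / (2 - δ)))) := by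
        apply mul_le_mul_of_nonneg_left _ (by positivity)
        exact mul_le_mul_of_nonneg_left (le_trans hJ hA0bd) (by positivity)
    _ = (2 / T) * (M₁ * (b ^ (2 - δ) / (2 - δ))) := by
        field_simp
    _ = 2 * M₁ * T ^ (2 - δ) / (T * (2 - δ)) * (k:ℝ) ^ (δ - 2) := by
        rw [hbdef, Real.div_rpow hT.le (Nat.cast_nonneg k),
          show (δ - 2 : ℝ) = -(2 - δ) from by ring, Real.rpow_neg (Nat.cast_nonneg k)]
        field_simp
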